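/- arXiv:1607.00049 — 10 statements merged into one kernel-verified Lean document; each statement's English description precedes it below -/
import Mathlib

section
/- Let G be a metric group, K ⊆ G compact, and μ an outer regular Borel measure on G. Then the map m_K : t ↦ μ(Kt) is upper semicontinuous on G. -/
open Set Filter Topology Pointwise MeasureTheory

/-- For a metric group `G` with left-invariant metric, compact `K` and an outer
regular Borel measure `μ`, the map `t ↦ μ(Kt)` is upper semicontinuous. -/
theorem measure_translate_upperSemicontinuous
    {G : Type*} [Group G] [MetricSpace G] [IsTopologicalGroup G]
    [MeasurableSpace G] [BorelSpace G]
    (hinv : ∀ g x y : G, dist (g * x) (g * y) = dist x y)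
    (μ : Measure G) [μ.OuterRegular]
    (K : Set G) (hK : IsCompact K) :
    UpperSemicontinuous fun t : G => μ (K * {t}) := by
  intro t₀ c hc
  have hKt : IsCompact (K * {t₀}) := hK.mul isCompact_singleton
  obtain ⟨U, hU_sub, hU_open, hμU⟩ :=
    (K * {t₀}).exists_isOpen_lt_of_lt c hc
  obtain ⟨V, hV, hKV⟩ := compact_open_separated_mul_right hKt hU_open hU_sub
  have h1 : Tendsto (fun t : G => t₀⁻¹ * t) (𝓝 t₀) (𝓝 (1 : G)) := by
    have h : Tendsto (fun t : G => t₀⁻¹ * t) (𝓝 t₀) (𝓝 (t₀⁻¹ * t₀)) :=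
      (continuous_mul_left t₀⁻¹).tendsto t₀
    rwa [inv_mul_cancel t₀] at h
  filter_upwards [h1 hV] with t ht
  have hsub : K * {t} ⊆ U := by
    rintro x ⟨k, hk, s, hs, rfl⟩
    rcases hs with rfl
    show k * s ∈ U
    have : k * s = (k * t₀) * (t₀⁻¹ * s) := by group
    rw [this]
    exact hKV (Set.mul_mem_mul ⟨k, hk, t₀, rfl, rfl⟩ ht)
  exact lt_of_le_of_lt (measure_mono hsub) hμU
end

section
/- Let G be a metric group, μ a finitely additive regular probability measure on G, K ⊆ G compact, and t_n → 1 a null sequence. If liminf_n μ(K t_n) > 0, then there exists m ∈ ℕ such that μ(K ∩ K t_n) > liminf_k μ(K t_k)/4 > 0 for all n > m; in particular t_n ∈ K⁻¹K for all n > m. -/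
open Set Filter Topology Pointwise

/-- Lemma 1′: if `liminf μ(K t_n) > 0` along a null sequence `t`, then
eventually `μ(K ∩ K t_n) > liminf μ(K t_k)/4 > 0`, so `t_n ∈ K⁻¹K`. -/
theorem selective_subcontinuity_sequence
    {G : Type*} [Group G] [MetricSpace G] [IsTopologicalGroup G]
    (hinv : ∀ g x y : G, dist (g * x) (g * y) = dist x y)
    (μ : Set G → ℝ)
    (hmono : ∀ A B : Set G, A ⊆ B → μ A ≤ μ B)
    (hadd : ∀ A B : Set G, Disjoint A B → μ (A ∪ B) = μ A + μ B)
    (hnn : ∀ A : Set G, 0 ≤ μ A) (hprob : μ Set.univ = 1)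
    (houter : ∀ C : Set G, IsCompact C → ∀ ε > (0 : ℝ),
      ∃ U : Set G, IsOpen U ∧ C ⊆ U ∧ μ U < μ C + ε)
    (K : Set G) (hK : IsCompact K)
    (t : ℕ → G) (ht : Tendsto t atTop (𝓝 1))
    (hL : 0 < Filter.liminf (fun n => μ (K * {t n})) atTop) :
    0 < Filter.liminf (fun n => μ (K * {t n})) atTop / 4 ∧
      ∃ m : ℕ, ∀ n > m,
        Filter.liminf (fun k => μ (K * {t k})) atTop / 4 < μ (K ∩ K * {t n}) ∧
        t n ∈ K⁻¹ * K := by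
  set L := Filter.liminf (fun n => μ (K * {t n})) atTop with hLdef
  have hempty : μ (∅ : Set G) = 0 := by
    have := hadd ∅ ∅ (disjoint_bot_left)
    simp at this
    linarith
  refine ⟨by linarith, ?_⟩
  obtain ⟨U, hUopen, hKU, hUμ⟩ := houter K hK (L / 4) (by linarith)
  obtain ⟨V, hV, hKV⟩ := compact_open_separated_mul_right hK hUopen hKU
  have hVev : ∀ᶠ n in atTop, t n ∈ V := ht hV
  have hLev : ∀ᶠ n in atTop, L / 2 < μ (K * {t n}) := by
    exact Filter.eventually_lt_of_lt_liminf (by linarith)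
      ⟨0, Filter.eventually_map.2 (Filter.Eventually.of_forall fun n => hnn _)⟩
  obtain ⟨m, hm⟩ := Filter.eventually_atTop.mp (hVev.and hLev)
  refine ⟨m, fun n hn => ?_⟩
  obtain ⟨htV, htL⟩ := hm n (le_of_lt hn)
  set B := K * {t n} with hB
  have hBU : B ⊆ U := fun x hx => hKV (by
    rcases Set.mem_mul.mp hx with ⟨a, ha, b, hb, rfl⟩
    exact Set.mul_mem_mul ha (by simpa using hb ▸ htV))
  have h1 : μ (K ∪ B) = μ K + μ (B \ K) := by
    rw [← Set.union_diff_self]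
    exact hadd K (B \ K) disjoint_sdiff_right
  have h2 : μ B = μ (B ∩ K) + μ (B \ K) := by
    rw [← hadd (B ∩ K) (B \ K)
      (Set.disjoint_of_subset_left Set.inter_subset_right disjoint_sdiff_right)]
    rw [Set.inter_union_diff]
  have h3 : μ (K ∪ B) ≤ μ U := hmono _ _ (Set.union_subset hKU hBU)
  have hinter : μ (K ∩ B) = μ (B ∩ K) := by rw [Set.inter_comm]
  have hmain : L / 4 < μ (K ∩ B) := by
    rw [hinter]
    linarith
  refine ⟨by rw [Set.inter_self, ← hB]; linarith, ?_⟩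
  have hne : (K ∩ B).Nonempty := by
    rcases Set.eq_empty_or_nonempty (K ∩ B) with h | h
    · rw [h, hempty] at hmain; linarith
    · exact h
  obtain ⟨x, hxK, hxB⟩ := hne
  rcases Set.mem_mul.mp hxB with ⟨a, ha, b, hb, hab⟩
  have hb' : b = t n := by simpa using hb
  have : t n = a⁻¹ * x := by
    rw [← hab, hb']; group
  rw [this]
  exact Set.mul_mem_mul (Set.inv_mem_inv.mpr ha) hxK
end

section
/- Let G be a metric group, μ a finitely additive regular probability measure, and K ⊆ G compact with μ(K) > 0. If μ₋(K) := sup_{δ>0} inf{μ(Kt) : ‖t‖ < δ} > 0, then there exists δ > 0 with K ∩ Kt ≠ ∅ for all t with ‖t‖ < δ, i.e., B_δ ⊆ K⁻¹K; in particular, G is locally compact. -/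
open Set Filter Topology Pointwise

/-- If `μ₋(K) = sup_{δ>0} inf {μ(Kt) : ‖t‖ < δ} > 0` for a finitely additive
regular probability measure `μ` and compact `K` with `μ K > 0`, then some ball
`B_δ` satisfies `K ∩ Kt ≠ ∅` for all `t ∈ B_δ`, i.e. `B_δ ⊆ K⁻¹K`;
in particular `G` is locally compact. -/
theorem subcontinuity_locally_compact
    {G : Type*} [Group G] [MetricSpace G] [IsTopologicalGroup G]
    (hinv : ∀ g x y : G, dist (g * x) (g * y) = dist x y)
    (μ : Set G → ℝ)
    (hmono : ∀ A B : Set G, A ⊆ B → μ A ≤ μ B)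
    (hadd : ∀ A B : Set G, Disjoint A B → μ (A ∪ B) = μ A + μ B)
    (hnn : ∀ A : Set G, 0 ≤ μ A) (hprob : μ Set.univ = 1)
    (houter : ∀ C : Set G, IsCompact C → ∀ ε > (0 : ℝ),
      ∃ U : Set G, IsOpen U ∧ C ⊆ U ∧ μ U < μ C + ε)
    (K : Set G) (hK : IsCompact K) (hKpos : 0 < μ K)
    (hμminus : 0 < sSup {r : ℝ | ∃ δ > (0 : ℝ),
      r = sInf ((fun z : G => μ (K * {z})) '' Metric.ball (1 : G) δ)}) :
    (∃ δ > (0 : ℝ), (∀ z ∈ Metric.ball (1 : G) δ, (K ∩ K * {z}).Nonempty) ∧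
      Metric.ball (1 : G) δ ⊆ K⁻¹ * K) ∧ LocallyCompactSpace G := by
  -- extract a positive element of the sup set
  obtain ⟨r, ⟨δ, hδ, hr⟩, hrpos⟩ :
      ∃ r ∈ {r : ℝ | ∃ δ > (0 : ℝ),
        r = sInf ((fun z : G => μ (K * {z})) '' Metric.ball (1 : G) δ)}, 0 < r := by
    by_contra h
    push_neg at h
    exact absurd (Real.sSup_nonpos fun x hx => (h x hx)) (not_le.mpr hμminus)
  have hc : ∀ z ∈ Metric.ball (1 : G) δ, r ≤ μ (K * {z}) := by
    intro z hz
    rw [hr]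
    refine csInf_le ⟨0, ?_⟩ ⟨z, hz, rfl⟩
    rintro x ⟨y, -, rfl⟩
    exact hnn _
  obtain ⟨U, hUopen, hKU, hUlt⟩ := houter K hK r hrpos
  obtain ⟨ε, hε, hth⟩ := hK.exists_thickening_subset_open hUopen hKU
  set δ' := min δ ε with hδ'
  have hδ'pos : 0 < δ' := lt_min hδ hε
  have key' : ∀ z ∈ Metric.ball (1 : G) δ', (K ∩ (K * {z})).Nonempty := by
    intro z hz
    have hzd : dist z 1 < δ' := Metric.mem_ball.mp hz
    have hzδ : z ∈ Metric.ball (1 : G) δ :=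
      Metric.mem_ball.mpr (lt_of_lt_of_le hzd (min_le_left _ _))
    have hsub : K * {z} ⊆ U := by
      intro x hx
      rw [Set.mul_singleton] at hx
      obtain ⟨k, hk, rfl⟩ := hx
      apply hth
      rw [Metric.mem_thickening_iff]
      refine ⟨k, hk, ?_⟩
      have : dist (k * z) k = dist z 1 := by simpa using hinv k z 1
      rw [this]
      exact lt_of_lt_of_le hzd (min_le_right _ _)
    by_contra hempty
    rw [Set.not_nonempty_iff_eq_empty] at hempty
    have hdisj : Disjoint K (K * {z}) := Set.disjoint_iff_inter_eq_empty.mpr hempty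
    have h1 : μ (K ∪ K * {z}) = μ K + μ (K * {z}) := hadd _ _ hdisj
    have h2 : μ (K ∪ K * {z}) ≤ μ U := hmono _ _ (Set.union_subset hKU hsub)
    have h3 := hc z hzδ
    linarith
  have key : ∀ z ∈ Metric.ball (1 : G) δ', (K ∩ K * {z}).Nonempty := by
    intro z hz
    obtain ⟨x, hxK, hxKz⟩ := key' z hz
    rw [Set.inter_self]
    rw [Set.mul_singleton] at hxKz ⊢
    obtain ⟨k, hk, hkz⟩ := hxKz
    exact ⟨x, k, hk, hkz⟩
  have hsubset : Metric.ball (1 : G) δ' ⊆ K⁻¹ * K := by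
    intro z hz
    obtain ⟨x, hxK, hxKz⟩ := key' z hz
    rw [Set.mul_singleton] at hxKz
    obtain ⟨k, hk, hkz⟩ := hxKz
    refine ⟨k⁻¹, Set.inv_mem_inv.mpr hk, x, hxK, ?_⟩
    rw [← hkz]
    group
  have hcomp : IsCompact (K⁻¹ * K) := hK.inv.mul hK
  refine ⟨⟨δ', hδ'pos, key, hsubset⟩, ?_⟩
  exact hcomp.locallyCompactSpace_of_mem_nhds_of_group
    (Filter.mem_of_superset (Metric.ball_mem_nhds 1 hδ'pos) hsubset)
end

section
/- Let G be a metric group, μ a Borel regular measure, and K ⊆ G compact. If the identity 1_G is not an interior point of K⁻¹K, then μ₋(K) := sup_{δ>0} inf{μ(Kt) : ‖t‖ < δ} = 0; equivalently, there is a sequence t_n → 1_G with μ(K t_n) → 0. -/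
open Set Filter Topology Pointwise MeasureTheory

/-- Mospan property: if `1` is not an interior point of `K⁻¹K`, then
`μ₋(K) = 0`; equivalently there is a null sequence `t_n → 1` with
`μ(K t_n) → 0`. -/
theorem mospan_property
    {G : Type*} [Group G] [MetricSpace G] [IsTopologicalGroup G]
    [MeasurableSpace G] [BorelSpace G]
    (hinv : ∀ g x y : G, dist (g * x) (g * y) = dist x y)
    (μ : Measure G) [μ.OuterRegular]
    (K : Set G) (hK : IsCompact K) (hKfin : μ K < ⊤)
    (hint : (1 : G) ∉ interior (K⁻¹ * K)) :
    (⨆ (δ : ℝ) (_ : 0 < δ), ⨅ (z : G) (_ : z ∈ Metric.ball (1 : G) δ),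
        μ (K * {z})) = 0 ∧
      ∃ t : ℕ → G, Tendsto t atTop (𝓝 1) ∧
        Tendsto (fun n => μ (K * {t n})) atTop (𝓝 0) := by
  have key : ∀ δ : ℝ, 0 < δ → ∀ ε : ENNReal, 0 < ε →
      ∃ t : G, dist t 1 < δ ∧ μ (K * {t}) < ε := by
    intro δ hδ ε hε
    obtain ⟨U, hKU, hUopen, hU⟩ := K.exists_isOpen_lt_add hKfin.ne hε.ne'
    obtain ⟨r, hr, hthick⟩ := hK.exists_thickening_subset_open hUopen hKU
    have hball : ¬ (Metric.ball (1:G) (min δ r) ⊆ K⁻¹ * K) := by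
      intro h
      exact hint (mem_interior.mpr ⟨Metric.ball 1 (min δ r), h, Metric.isOpen_ball,
        Metric.mem_ball_self (lt_min hδ hr)⟩)
    obtain ⟨t, htball, htK⟩ := not_subset.mp hball
    rw [Metric.mem_ball] at htball
    refine ⟨t, lt_of_lt_of_le htball (min_le_left _ _), ?_⟩
    have hsub : K * {t} ⊆ U := by
      intro x hx
      obtain ⟨k, hk, y, hy, hxy⟩ := Set.mem_mul.mp hx
      rw [Set.mem_singleton_iff] at hy
      rw [hy] at hxy
      apply hthick
      refine Metric.mem_thickening_iff.mpr ⟨k, hk, ?_⟩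
      rw [← hxy]
      calc dist (k * t) k = dist (k * t) (k * 1) := by rw [mul_one]
        _ = dist t 1 := hinv k t 1
        _ < r := lt_of_lt_of_le htball (min_le_right _ _)
    have hdisj : Disjoint K (K * {t}) := by
      rw [Set.disjoint_left]
      intro x hx hx'
      obtain ⟨k, hk, y, hy, hxy⟩ := Set.mem_mul.mp hx'
      rw [Set.mem_singleton_iff] at hy
      rw [hy] at hxy
      apply htK
      refine Set.mem_mul.mpr ⟨k⁻¹, Set.inv_mem_inv.mpr hk, x, hx, ?_⟩
      rw [← hxy]; group
    have hmeas : MeasurableSet (K * {t}) := (hK.mul isCompact_singleton).measurableSet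
    have : μ K + μ (K * {t}) < μ K + ε := by
      calc μ K + μ (K * {t}) = μ (K ∪ K * {t}) := (measure_union hdisj hmeas).symm
        _ ≤ μ U := measure_mono (Set.union_subset hKU hsub)
        _ < μ K + ε := hU
    exact (ENNReal.add_lt_add_iff_left hKfin.ne).mp this
  constructor
  · refine le_antisymm (iSup_le fun δ => iSup_le fun hδ => ?_) zero_le
    refine ENNReal.le_of_forall_pos_le_add fun ε hε _ => ?_
    obtain ⟨t, ht, hμ⟩ := key δ hδ ε (by exact_mod_cast hε)
    calc (⨅ (z : G) (_ : z ∈ Metric.ball (1 : G) δ), μ (K * {z}))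
        ≤ μ (K * {t}) := biInf_le _ (Metric.mem_ball.mpr ht)
      _ ≤ 0 + ε := by rw [zero_add]; exact hμ.le
  · have h : ∀ n : ℕ, ∃ t : G, dist t 1 < 1 / (n + 1) ∧ μ (K * {t}) < (n : ENNReal)⁻¹ := by
      intro n
      rcases eq_or_ne (n : ENNReal)⁻¹ 0 with h0 | h0
      · simp [ENNReal.inv_eq_zero] at h0
      obtain ⟨t, ht, hμ⟩ := key (1 / (n + 1)) (by positivity) _ h0.bot_lt
      exact ⟨t, ht, hμ⟩
    choose t ht hμ using h
    refine ⟨t, ?_, ?_⟩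
    · rw [tendsto_iff_dist_tendsto_zero]
      exact squeeze_zero (fun n => dist_nonneg) (fun n => (ht n).le)
        tendsto_one_div_add_atTop_nhds_zero_nat
    · exact tendsto_of_tendsto_of_tendsto_of_le_of_le tendsto_const_nhds
        ENNReal.tendsto_inv_nat_nhds_zero (fun n => zero_le) (fun n => (hμ n).le)
end

section
/- Let G be a Polish group, μ a regular Borel measure on G, and K ⊆ G compact with μ(K) > 0. Suppose there is a sequence t_n → 1_G with μ(K t_n) = 0 for all n. Then there is a Borel set C ⊆ K with μ(K \ C) = 0 such that C⁻¹C has empty interior. -/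
open Set Filter Topology Pointwise MeasureTheory
open scoped ENNReal

/-- Mospan converse: if `μ(K) > 0` but `μ(K t_n) = 0` along some null
sequence, then `K` has a full-measure Borel subset `C` with `C⁻¹C` having
empty interior. -/
theorem mospan_converse
    {G : Type*} [Group G] [TopologicalSpace G] [PolishSpace G]
    [IsTopologicalGroup G] [MeasurableSpace G] [BorelSpace G]
    (μ : Measure G) [μ.Regular]
    (K : Set G) (hK : IsCompact K) (hKpos : 0 < μ K)
    (t : ℕ → G) (ht : Tendsto t atTop (𝓝 1))
    (hnull : ∀ n, μ (K * {t n}) = 0) :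
    ∃ C : Set G, MeasurableSet C ∧ C ⊆ K ∧ μ (K \ C) = 0 ∧
      interior (C⁻¹ * C) = ∅ := by
  classical
  -- membership in a right translate
  have hmem_mul : ∀ (A : Set G) (s x : G), x ∈ A * {s} ↔ x * s⁻¹ ∈ A := by
    intro A s x
    constructor
    · rintro ⟨a, ha, b, hb, rfl⟩
      rcases mem_singleton_iff.1 hb with rfl
      simpa using ha
    · intro h
      exact ⟨x * s⁻¹, h, s, rfl, inv_mul_cancel_right x s⟩
  -- if `C ∩ C s = ∅` then `s ∉ C⁻¹ C`
  have hnotmem : ∀ (C : Set G) (s : G), C ∩ (C * {s}) = ∅ → s ∉ C⁻¹ * C := by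
    intro C s hCs hs
    rcases hs with ⟨a, ha, b, hb, rfl⟩
    have hb' : b ∈ C * {a * b} := by
      rw [hmem_mul]
      have h1 : b * (a * b)⁻¹ = a⁻¹ := by group
      rw [h1]
      exact ha
    exact (eq_empty_iff_forall_notMem.1 hCs b) ⟨hb, hb'⟩
  set C0 : Set G := K \ ⋃ n, K * {t n} with hC0def
  have hKmeas : MeasurableSet K := hK.isClosed.measurableSet
  have htrans_meas : ∀ (A : Set G), MeasurableSet A → ∀ s : G, MeasurableSet (A * {s}) := by
    intro A hA s
    have h1 : A * {s} = (fun x => x * s⁻¹) ⁻¹' A := by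
      ext x; rw [hmem_mul]; rfl
    rw [h1]
    exact hA.preimage (measurable_mul_const _)
  have hC0meas : MeasurableSet C0 :=
    hKmeas.diff (MeasurableSet.iUnion fun n => htrans_meas K hKmeas (t n))
  have hC0sub : C0 ⊆ K := diff_subset
  have hC0null : μ (K \ C0) = 0 := by
    have hsub : K \ C0 ⊆ ⋃ n, K * {t n} := by
      intro x hx
      by_contra hxn
      exact hx.2 ⟨hx.1, hxn⟩
    exact measure_mono_null hsub (measure_iUnion_null hnull)
  -- key disjointness: C0 ∩ C0 tₙ = ∅
  have hC0disj : ∀ n, C0 ∩ (C0 * {t n}) = ∅ := by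
    intro n
    rw [eq_empty_iff_forall_notMem]
    rintro x ⟨hx1, hx2⟩
    have hxK : x ∈ K * {t n} := by
      rcases hx2 with ⟨c, hc, b, hb, rfl⟩
      exact ⟨c, hC0sub hc, b, hb, rfl⟩
    exact hx1.2 (mem_iUnion.2 ⟨n, hxK⟩)
  by_cases hint : interior (C0⁻¹ * C0) = ∅
  · exact ⟨C0, hC0meas, hC0sub, hC0null, hint⟩
  -- interior nonempty: the group is locally compact
  obtain ⟨x0, hx0⟩ : (interior (C0⁻¹ * C0)).Nonempty := nonempty_iff_ne_empty.2 hint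
  have hKK : IsCompact (K⁻¹ * K) := hK.inv.mul hK
  have hCCsub : C0⁻¹ * C0 ⊆ K⁻¹ * K :=
    mul_subset_mul (inv_subset_inv.2 hC0sub) hC0sub
  have hloc : LocallyCompactSpace G := by
    refine hKK.locallyCompactSpace_of_mem_nhds_of_group (x := x0) ?_
    exact mem_of_superset (isOpen_interior.mem_nhds hx0) (interior_subset.trans hCCsub)
  set lam : Measure G := Measure.haar with hlam
  -- Steinhaus: C0⁻¹ must be Haar-null
  have hSt : lam C0⁻¹ = 0 := by
    by_contra h
    have hpos : 0 < lam C0⁻¹ := pos_iff_ne_zero.2 h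
    have hnhds : C0⁻¹ / C0⁻¹ ∈ 𝓝 (1 : G) :=
      Measure.div_mem_nhds_one_of_haar_pos lam C0⁻¹ hC0meas.inv hpos
    have hev : ∀ᶠ n in atTop, t n ∈ C0⁻¹ / C0⁻¹ :=
      ht.eventually (eventually_of_mem hnhds fun x hx => hx)
    obtain ⟨n, hn⟩ := hev.exists
    rcases hn with ⟨a, ha, b, hb, hab⟩
    have hab' : a / b = t n := hab
    have hbmem : b⁻¹ ∈ C0 ∩ (C0 * {t n}) := by
      constructor
      · exact Set.mem_inv.1 hb
      · rw [hmem_mul]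
        have h2 : b⁻¹ * (t n)⁻¹ = a⁻¹ := by
          rw [← hab', div_eq_mul_inv, mul_inv_rev, inv_inv, inv_mul_cancel_left]
        rw [h2]
        exact Set.mem_inv.1 ha
    rw [hC0disj n] at hbmem
    exact hbmem
  -- right translates of C0⁻¹ are Haar-null
  have htrans : ∀ x : G, lam (C0⁻¹ * {x}) = 0 := by
    intro x
    have hEq : C0⁻¹ * {x} = (fun z => z * x⁻¹) ⁻¹' C0⁻¹ := by
      ext z; rw [hmem_mul]; simp
    rw [hEq]
    exact (measure_mul_right_null lam x⁻¹).2 hSt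
  set ν : Measure G := μ.restrict K with hν
  haveI hνfin : IsFiniteMeasure ν :=
    ⟨by rw [Measure.restrict_apply_univ]; exact hK.measure_lt_top⟩
  -- Fubini argument
  set T : Set (G × G) := {p : G × G | p.2 ∈ C0 ∧ p.2 * p.1⁻¹ ∈ C0} with hT
  have hTmeas : MeasurableSet T := by
    have h1 : MeasurableSet {p : G × G | p.2 ∈ C0} := hC0meas.preimage measurable_snd
    have h2 : MeasurableSet {p : G × G | p.2 * p.1⁻¹ ∈ C0} :=
      hC0meas.preimage (measurable_snd.mul measurable_fst.inv)
    exact h1.inter h2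
  have hslice : ∀ s : G, Prod.mk s ⁻¹' T = C0 ∩ (C0 * {s}) := by
    intro s
    ext x
    simp only [mem_preimage, hT, mem_setOf_eq, mem_inter_iff, hmem_mul]
  set f : G → G → ℝ≥0∞ := fun s x => T.indicator 1 (s, x) with hf
  have hfm : Measurable (Function.uncurry f) := by
    have h1 : Function.uncurry f = T.indicator 1 := rfl
    rw [h1]
    exact measurable_one.indicator hTmeas
  have hfslice : ∀ s : G, ∫⁻ x, f s x ∂ν = ν (C0 ∩ (C0 * {s})) := by
    intro s
    calc ∫⁻ x, f s x ∂ν = ∫⁻ x, (Prod.mk s ⁻¹' T).indicator 1 x ∂ν :=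
          lintegral_congr fun x => by
            simp only [hf, Set.indicator_apply, mem_preimage, Pi.one_apply]
      _ = ν (Prod.mk s ⁻¹' T) :=
          lintegral_indicator_one (hTmeas.preimage measurable_prodMk_left)
      _ = ν (C0 ∩ (C0 * {s})) := by rw [hslice s]
  have hinner : ∀ x : G, ∫⁻ s, f s x ∂lam = 0 := by
    intro x
    set A : Set G := {s : G | x ∈ C0 ∧ x * s⁻¹ ∈ C0} with hA
    have hAmeas : MeasurableSet A := by
      have h2 : MeasurableSet {s : G | x * s⁻¹ ∈ C0} :=
        hC0meas.preimage (measurable_const.mul measurable_inv)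
      have h1 : MeasurableSet {s : G | x ∈ C0} := MeasurableSet.const _
      exact h1.inter h2
    have hAnull : lam A = 0 := by
      refine measure_mono_null ?_ (htrans x)
      intro s hs
      rw [hmem_mul, Set.mem_inv]
      have h3 : (s * x⁻¹)⁻¹ = x * s⁻¹ := by group
      rw [h3]
      exact hs.2
    calc ∫⁻ s, f s x ∂lam = ∫⁻ s, A.indicator 1 s ∂lam :=
          lintegral_congr fun s => by
            simp only [hf, Set.indicator_apply, hT, hA, mem_setOf_eq, Pi.one_apply]
      _ = lam A := lintegral_indicator_one hAmeas
      _ = 0 := hAnull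
  have key : ∫⁻ s, ν (C0 ∩ (C0 * {s})) ∂lam = 0 := by
    calc ∫⁻ s, ν (C0 ∩ (C0 * {s})) ∂lam = ∫⁻ s, ∫⁻ x, f s x ∂ν ∂lam :=
          lintegral_congr fun s => (hfslice s).symm
      _ = ∫⁻ x, ∫⁻ s, f s x ∂lam ∂ν := lintegral_lintegral_swap hfm.aemeasurable
      _ = ∫⁻ x, (0 : ℝ≥0∞) ∂ν := lintegral_congr fun x => hinner x
      _ = 0 := lintegral_zero
  have hgm : Measurable fun s => ν (C0 ∩ (C0 * {s})) := by
    have h := measurable_measure_prodMk_left (ν := ν) hTmeas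
    have h1 : (fun s => ν (Prod.mk s ⁻¹' T)) = fun s => ν (C0 ∩ (C0 * {s})) :=
      funext fun s => by rw [hslice s]
    rwa [h1] at h
  have hae : lam {s : G | ν (C0 ∩ (C0 * {s})) ≠ 0} = 0 := by
    have h0 := (lintegral_eq_zero_iff hgm).1 key
    simpa [Filter.EventuallyEq, ae_iff] using h0
  -- for every nonempty open set, a good point exists
  have hZne : ∀ U : Set G, IsOpen U → U.Nonempty → ∃ s ∈ U, ν (C0 ∩ (C0 * {s})) = 0 := by
    intro U hU hUne
    by_contra h
    push_neg at h
    have hsub : U ⊆ {s : G | ν (C0 ∩ (C0 * {s})) ≠ 0} := fun s hs => h s hs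
    exact (hU.measure_pos lam hUne).ne' (measure_mono_null hsub hae)
  -- choose a good point in each basis element
  set B := TopologicalSpace.countableBasis G with hB
  have hBc : B.Countable := TopologicalSpace.countable_countableBasis G
  haveI : Countable B := hBc.to_subtype
  have hch : ∀ U : B, ∃ s : G,
      ν (C0 ∩ (C0 * {s})) = 0 ∧ ((U : Set G).Nonempty → s ∈ (U : Set G)) := by
    rintro ⟨U, hU⟩
    by_cases hne : U.Nonempty
    · obtain ⟨s, hsU, hs0⟩ :=
        hZne U (TopologicalSpace.isOpen_of_mem_countableBasis hU) hne
      exact ⟨s, hs0, fun _ => hsU⟩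
    · obtain ⟨s, _, hs0⟩ := hZne univ isOpen_univ ⟨1, trivial⟩
      exact ⟨s, hs0, fun h => absurd h hne⟩
  choose σ hσ0 hσmem using hch
  set N : Set G := ⋃ U : B, (C0 ∩ (C0 * {σ U})) with hN
  have hNpart_meas : ∀ U : B, MeasurableSet (C0 ∩ (C0 * {σ U})) := fun U =>
    hC0meas.inter (htrans_meas C0 hC0meas (σ U))
  have hNmeas : MeasurableSet N := MeasurableSet.iUnion hNpart_meas
  have hNnull : μ N = 0 := by
    refine measure_iUnion_null fun U => ?_
    have h0 := hσ0 U
    have hA : C0 ∩ (C0 * {σ U}) ⊆ K := fun x hx => hC0sub hx.1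
    rw [hν, Measure.restrict_apply (hNpart_meas U)] at h0
    rwa [inter_eq_self_of_subset_left hA] at h0
  set C : Set G := C0 \ N with hC
  have hCmeas : MeasurableSet C := hC0meas.diff hNmeas
  have hCsub : C ⊆ K := fun x hx => hC0sub hx.1
  have hCnull : μ (K \ C) = 0 := by
    have hsub : K \ C ⊆ (K \ C0) ∪ N := by
      intro x hx
      by_cases hx0 : x ∈ C0
      · right
        by_contra hxN
        exact hx.2 ⟨hx0, hxN⟩
      · left; exact ⟨hx.1, hx0⟩
    exact measure_mono_null hsub (measure_union_null hC0null hNnull)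
  refine ⟨C, hCmeas, hCsub, hCnull, ?_⟩
  rw [eq_empty_iff_forall_notMem]
  intro x hx
  obtain ⟨U, hUB, hxU, hUsub⟩ :=
    (TopologicalSpace.isBasis_countableBasis G).exists_subset_of_mem_open hx isOpen_interior
  have hUne : U.Nonempty := ⟨x, hxU⟩
  have hsU : σ ⟨U, hUB⟩ ∈ U := hσmem ⟨U, hUB⟩ hUne
  have hsmem : σ ⟨U, hUB⟩ ∈ C⁻¹ * C := interior_subset (hUsub hsU)
  have hCdisj : C ∩ (C * {σ ⟨U, hUB⟩}) = ∅ := by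
    rw [eq_empty_iff_forall_notMem]
    rintro y ⟨hy1, hy2⟩
    have hyN : y ∈ N := by
      refine mem_iUnion.2 ⟨⟨U, hUB⟩, hy1.1, ?_⟩
      rcases hy2 with ⟨c, hc, b, hb, rfl⟩
      exact ⟨c, hc.1, b, hb, rfl⟩
    exact hy1.2 hyN
  exact hnotmem C _ hCdisj hsmem
end

section
/- (Self-intersection Lemma.) Let G be a Polish group, μ a Borel probability measure, and E a universally measurable set that is not Haar null. Set μ̂(E) := sup{μ(gEh) : g,h ∈ G} and ‖x‖_E := μ̂(xE △ E). Then for every ε with 0 < ε < μ̂(E), the 'ball' {x ∈ G : ‖x‖_E < ε} is contained in EE⁻¹; equivalently, E ∩ xE ≠ ∅ whenever ‖x‖_E < ε. -/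
open Set Filter Topology Pointwise MeasureTheory
open scoped symmDiff

/-- A set is universally measurable if it is measurable with respect to every
Borel probability measure. -/
def UnivMeas {G : Type*} [MeasurableSpace G] (B : Set G) : Prop :=
  ∀ ν : Measure G, IsProbabilityMeasure ν → NullMeasurableSet B ν

/-- Two-sided translate `gEh`. -/
def biTranslate {G : Type*} [Group G] (g h : G) (E : Set G) : Set G :=
  (fun e => g * e * h) '' E

/-- `E` is Haar null. -/
def IsHaarNull {G : Type*} [Group G] [MeasurableSpace G] (E : Set G) : Prop :=
  ∃ B : Set G, UnivMeas B ∧ E ⊆ B ∧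
    ∃ ν : Measure G, IsProbabilityMeasure ν ∧ ∀ g h : G, ν (biTranslate g h B) = 0

/-- The submeasure `μ̂(E) = sup{μ(gEh)}`. -/
noncomputable def hatMeasure {G : Type*} [Group G] [MeasurableSpace G]
    (μ : Measure G) (E : Set G) : ENNReal :=
  ⨆ (g : G) (h : G), μ (biTranslate g h E)

/-- Self-intersection lemma: for non-Haar-null universally measurable `E` and
`0 < ε < μ̂(E)`, the ball `{x : μ̂(xE △ E) < ε}` lies inside `EE⁻¹`;
equivalently `E ∩ xE ≠ ∅` for such `x`. -/
theorem self_intersection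
    {G : Type*} [Group G] [TopologicalSpace G] [PolishSpace G]
    [IsTopologicalGroup G] [MeasurableSpace G] [BorelSpace G]
    (μ : Measure G) [IsProbabilityMeasure μ]
    (E : Set G) (hE : UnivMeas E) (hEn : ¬ IsHaarNull E)
    (ε : ENNReal) (hε : 0 < ε) (hεE : ε < hatMeasure μ E) :
    ∀ x : G, hatMeasure μ ((x • E) ∆ E) < ε →
      x ∈ E * E⁻¹ ∧ (E ∩ x • E).Nonempty := by
  intro x hx
  have hne : (E ∩ x • E).Nonempty := by
    by_contra hemp
    have hdisj : E ∩ x • E = ∅ := not_nonempty_iff_eq_empty.mp hemp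
    have hsub : E ⊆ (x • E) ∆ E := by
      intro a ha
      have : a ∉ x • E := fun h => (eq_empty_iff_forall_notMem.mp hdisj a) ⟨ha, h⟩
      exact Or.inr ⟨ha, this⟩
    have hmono : hatMeasure μ E ≤ hatMeasure μ ((x • E) ∆ E) :=
      iSup_mono fun g => iSup_mono fun h =>
        measure_mono (Set.image_mono hsub)
    exact absurd (lt_of_le_of_lt hmono hx) (not_lt.mpr hεE.le)
  refine ⟨?_, hne⟩
  obtain ⟨a, haE, b, hbE, hab⟩ := hne
  exact ⟨a, haE, b⁻¹, Set.inv_mem_inv.mpr hbE, by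
    simp only [← hab, smul_eq_mul]; group⟩
end

section
/- (Left Lebesgue decomposition.) Let G be a Polish group and μ, ν σ-finite regular Borel measures on G. Then there exist measures ν_a and ν_s with ν = ν_a + ν_s such that ν_a(N) = 0 for every left μ-null set N, and ν_s is concentrated on a universally measurable set B with μ(gB) = 0 for all g ∈ G. -/
open Set Filter Topology Pointwise MeasureTheory
open scoped ENNReal

/-- `N` is left `μ`-null: covered by a universally measurable `B` with all
left translates `gB` of `μ`-measure zero. -/
def IsLeftNull {G : Type*} [Group G] [MeasurableSpace G]
    (μ : Measure G) (N : Set G) : Prop :=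
  ∃ B : Set G, UnivMeas B ∧ N ⊆ B ∧ ∀ g : G, μ (g • B) = 0

lemma isLeftNull_empty {G : Type*} [Group G] [MeasurableSpace G] (μ : Measure G) :
    IsLeftNull μ (∅ : Set G) :=
  ⟨∅, fun _ _ => MeasurableSet.empty.nullMeasurableSet, subset_rfl,
    fun g => by simp [smul_set_empty]⟩

lemma isLeftNull_iUnion {G : Type*} [Group G] [MeasurableSpace G] (μ : Measure G)
    {B : ℕ → Set G} (h : ∀ n, IsLeftNull μ (B n)) : IsLeftNull μ (⋃ n, B n) := by
  choose C hCu hCs hCn using h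
  refine ⟨⋃ n, C n, fun p hp => NullMeasurableSet.iUnion fun n => hCu n p hp,
    iUnion_mono hCs, fun g => ?_⟩
  rw [smul_set_iUnion]
  exact le_antisymm ((measure_iUnion_le _).trans (by simp [hCn])) zero_le

/-- Left Lebesgue decomposition: `ν = ν_a + ν_s` with `ν_a` vanishing on
left `μ`-null sets and `ν_s` concentrated on a universally measurable set all
of whose left translates are `μ`-null. -/
theorem left_lebesgue_decomposition
    {G : Type*} [Group G] [TopologicalSpace G] [PolishSpace G]
    [IsTopologicalGroup G] [MeasurableSpace G] [BorelSpace G]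
    (μ ν : Measure G) [SigmaFinite μ] [SigmaFinite ν] [μ.Regular] [ν.Regular] :
    ∃ νa νs : Measure G, ν = νa + νs ∧
      (∀ N : Set G, IsLeftNull μ N → νa N = 0) ∧
      ∃ B : Set G, UnivMeas B ∧ (∀ g : G, μ (g • B) = 0) ∧ νs Bᶜ = 0 := by
  obtain ⟨ν', hfin, hν_ac, hν'_ac⟩ := exists_isFiniteMeasure_absolutelyContinuous ν
  by_cases h0 : ν' univ = 0
  · -- then ν = 0
    have hν0 : ν = 0 := by
      ext s hs
      exact hν_ac (le_antisymm ((measure_mono (subset_univ s)).trans h0.le) zero_le)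
    refine ⟨0, 0, by simp [hν0], fun _ _ => rfl, ∅,
      fun _ _ => MeasurableSet.empty.nullMeasurableSet,
      fun g => by simp [smul_set_empty], by simp⟩
  · set p : Measure G := (ν' univ)⁻¹ • ν' with hp
    have htop : ν' univ ≠ ⊤ := measure_ne_top _ _
    have hprob : IsProbabilityMeasure p := by
      constructor
      simp [hp, Measure.smul_apply, smul_eq_mul, ENNReal.inv_mul_cancel h0 htop]
    have hνp : ν ≪ p := by
      refine hν_ac.trans (fun s hs => ?_)
      simp only [hp, Measure.smul_apply, smul_eq_mul] at hs
      rcases mul_eq_zero.mp hs with h | h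
      · exact absurd h (ENNReal.inv_ne_zero.mpr htop)
      · exact h
    -- sup of p-measures of left-null sets
    set c : ℝ≥0∞ := ⨆ B : {B : Set G // IsLeftNull μ B}, p B with hc
    have hc1 : c ≤ 1 := iSup_le fun B => prob_le_one
    have hct : c ≠ ⊤ := (hc1.trans_lt ENNReal.one_lt_top).ne
    have hex : ∀ n : ℕ, ∃ B : Set G, IsLeftNull μ B ∧ c ≤ p B + ((n : ℝ≥0∞))⁻¹ := by
      intro n
      by_cases hc0 : c = 0
      · exact ⟨∅, isLeftNull_empty μ, by simp [hc0]⟩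
      · have hn : ((n : ℝ≥0∞))⁻¹ ≠ 0 := by simp
        have hcn : c - (n : ℝ≥0∞)⁻¹ < c := ENNReal.sub_lt_self hct hc0 hn
        obtain ⟨⟨B, hB⟩, hBlt⟩ := lt_iSup_iff.mp (hc ▸ hcn)
        exact ⟨B, hB, tsub_le_iff_right.mp hBlt.le⟩
    choose Bn hBn hBc using hex
    obtain ⟨B, hBu, hB0B, hBtr⟩ := isLeftNull_iUnion μ hBn
    have hBleft : IsLeftNull μ B := ⟨B, hBu, subset_rfl, hBtr⟩
    have hcB : p B ≤ c := le_iSup (fun B : {B : Set G // IsLeftNull μ B} => p ↑B) ⟨B, hBleft⟩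
    have hpBc : c ≤ p B := by
      refine ENNReal.le_of_forall_pos_le_add fun ε hε _ => ?_
      obtain ⟨n, hn⟩ := ENNReal.exists_inv_nat_lt (a := (ε : ℝ≥0∞))
        (by exact_mod_cast hε.ne')
      calc c ≤ p (Bn n) + (n : ℝ≥0∞)⁻¹ := hBc n
        _ ≤ p B + ε :=
          add_le_add (measure_mono ((subset_iUnion Bn n).trans hB0B)) hn.le
    have hBmax : ∀ N : Set G, IsLeftNull μ N → ν (N \ B) = 0 := by
      rintro N ⟨C, hCu, hNC, hCn⟩
      have hun : IsLeftNull μ (B ∪ C) := by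
        refine ⟨B ∪ C, fun q hq => (hBu q hq).union (hCu q hq), subset_rfl, fun g => ?_⟩
        rw [smul_set_union]
        exact le_antisymm ((measure_union_le _ _).trans (by simp [hBtr g, hCn g])) zero_le
      have h1 : p (B ∪ C) ≤ c :=
        le_iSup (fun B : {B : Set G // IsLeftNull μ B} => p ↑B) ⟨B ∪ C, hun⟩
      have h2 : p B + p ((B ∪ C) \ B) = p (B ∪ C) := by
        have h := measure_inter_add_diff₀ (μ := p) (B ∪ C) (hBu p hprob)
        rwa [union_inter_cancel_left] at h
      have h3 : p B + p ((B ∪ C) \ B) ≤ p B + 0 := by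
        rw [add_zero, h2]; exact h1.trans hpBc
      have h4 : p ((B ∪ C) \ B) = 0 :=
        le_antisymm (ENNReal.add_le_add_iff_left (measure_ne_top p B) |>.mp h3) zero_le
      rw [union_diff_left] at h4
      exact measure_mono_null (diff_subset_diff_left hNC) (hνp h4)
    have hnmB : NullMeasurableSet B ν := (hBu p hprob).mono_ac hνp
    refine ⟨ν.restrict Bᶜ, ν.restrict B, ?_, ?_, B, hBu, hBtr, ?_⟩
    · ext s hs
      rw [Measure.add_apply, Measure.restrict_apply₀' hnmB.compl,
        Measure.restrict_apply₀' hnmB, ← diff_eq, add_comm,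
        measure_inter_add_diff₀ s hnmB]
    · intro N hN
      rw [Measure.restrict_apply₀' hnmB.compl, ← diff_eq]
      exact hBmax N hN
    · rw [Measure.restrict_apply₀' hnmB, compl_inter_self]
      exact measure_empty
end

section
/- (Simmons–Mospan theorem, forward direction.) Let G be a locally compact Polish group with left Haar measure η and μ a regular Borel measure on G with μ ≪ η (absolutely continuous). Then μ has the Steinhaus–Weil property: for every Borel set B with μ(B) > 0, the identity 1_G is an interior point of B⁻¹B. -/
open Set Filter Topology Pointwise MeasureTheory

/-- Simmons–Mospan theorem, forward direction: a regular Borel measure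
absolutely continuous with respect to Haar measure has the Steinhaus–Weil
property. -/
theorem simmons_mospan_forward
    {G : Type*} [Group G] [TopologicalSpace G] [PolishSpace G]
    [IsTopologicalGroup G] [LocallyCompactSpace G]
    [MeasurableSpace G] [BorelSpace G]
    (η : Measure G) [η.IsHaarMeasure]
    (μ : Measure G) [μ.Regular] (hac : μ ≪ η) :
    ∀ B : Set G, MeasurableSet B → 0 < μ B →
      (1 : G) ∈ interior (B⁻¹ * B) := by
  intro B hB hμB
  have hηB : η B ≠ 0 := fun h => by simpa [hac h] using hμB
  have hηBi : 0 < η B⁻¹ := by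
    rw [pos_iff_ne_zero, Ne, measure_inv_null]
    exact hηB
  have h := MeasureTheory.Measure.div_mem_nhds_one_of_haar_pos η B⁻¹ hB.inv hηBi
  rw [mem_interior_iff_mem_nhds]
  simpa [div_eq_mul_inv] using h
end

section
/- (After Simmons.) Let G be a separable metrizable group, μ, ν regular Borel measures, and K ⊆ G a compact set carrying ν (ν(G \ K) = 0) such that ν(xK) = 0 for a dense set of x ∈ G. Then there is a Borel set B ⊆ K with ν(K \ B) = 0 such that BB⁻¹ has empty interior. -/
open Set Filter Topology Pointwise MeasureTheory

/-- After Simmons: if a compact set `K` carries `ν` and `ν(xK) = 0` for a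
dense set of `x`, then some Borel `B ⊆ K` of full `ν`-measure in `K` has
`BB⁻¹` with empty interior. -/
theorem simmons_lemma
    {G : Type*} [Group G] [TopologicalSpace G] [IsTopologicalGroup G]
    [TopologicalSpace.SeparableSpace G] [TopologicalSpace.MetrizableSpace G]
    [MeasurableSpace G] [BorelSpace G]
    (μ ν : Measure G) [μ.Regular] [ν.Regular]
    (K : Set G) (hK : IsCompact K) (hcarry : ν Kᶜ = 0)
    (hdense : Dense {x : G | ν (x • K) = 0}) :
    ∃ B : Set G, MeasurableSet B ∧ B ⊆ K ∧ ν (K \ B) = 0 ∧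
      interior (B * B⁻¹) = ∅ := by
  set S0 : Set G := {x : G | ν (x • K) = 0} with hS0
  letI := TopologicalSpace.pseudoMetrizableSpacePseudoMetric G
  have hsep : TopologicalSpace.IsSeparable S0 :=
    TopologicalSpace.IsSeparable.of_separableSpace S0
  haveI : TopologicalSpace.SeparableSpace S0 := hsep.separableSpace
  obtain ⟨t, tcount, tdense⟩ := TopologicalSpace.exists_countable_dense S0
  set D : Set G := ((↑) : S0 → G) '' t with hD
  have hDsub : D ⊆ S0 := by rintro x ⟨y, -, rfl⟩; exact y.2
  have hDcount : D.Countable := tcount.image _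
  have hS0subcl : S0 ⊆ closure D := by
    intro x hx
    have h1 : (⟨x, hx⟩ : S0) ∈ closure t := tdense _
    exact map_mem_closure continuous_subtype_val h1
      (fun y hy => mem_image_of_mem _ hy)
  have hDdense : Dense D := by
    rw [dense_iff_closure_eq]
    apply eq_univ_of_univ_subset
    calc univ = closure S0 := (hdense.closure_eq).symm
    _ ⊆ closure D := closure_minimal hS0subcl isClosed_closure
  set S : Set G := ⋃ d ∈ D, d • K with hS
  refine ⟨K \ S, ?_, diff_subset, ?_, ?_⟩
  · refine (hK.isClosed.measurableSet).diff ?_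
    refine MeasurableSet.biUnion hDcount fun d _ => ?_
    have : IsCompact (d • K) := hK.smul d
    exact this.isClosed.measurableSet
  · have hSnull : ν S = 0 := by
      refine (measure_biUnion_null_iff hDcount).2 fun d hd => ?_
      exact hDsub hd
    have : K \ (K \ S) ⊆ S := fun x hx =>
      Classical.byContradiction fun h => hx.2 ⟨hx.1, h⟩
    exact measure_mono_null this hSnull
  · by_contra h
    obtain ⟨x, hx⟩ := nonempty_iff_ne_empty.2 h
    obtain ⟨d, hdD, hdI⟩ := hDdense.exists_mem_open isOpen_interior ⟨x, hx⟩
    have hd : d ∈ (K \ S) * (K \ S)⁻¹ := interior_subset hdI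
    obtain ⟨a, ha, b, hb, hab⟩ := hd
    have hbB : b⁻¹ ∈ K \ S := by simpa using hb
    have haS : a ∈ S := by
      have : a ∈ d • K := by
        refine ⟨b⁻¹, hbB.1, ?_⟩
        show d * b⁻¹ = a
        rw [← hab]
        group
      exact mem_biUnion hdD this
    exact ha.2 haS
end

section
/- (Almost Inclusion-Exclusion.) Let G be a Polish group, μ a Borel probability measure, and E, F μ-measurable sets with μ(E) > 0 and μ(F) > 0. Then μ(xE △ E) = 0 for μ-almost all x ∈ F if and only if both: (i) μ(F \ xE⁻¹) = 0 for μ-almost all x ∈ E, and (ii) μ(F ∩ xE⁻¹) = 0 for μ-almost all x ∉ E. -/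
open Set Filter Topology Pointwise MeasureTheory
open scoped symmDiff

/-- Almost Inclusion-Exclusion: `μ(xE △ E) = 0` for `μ`-a.a. `x ∈ F` iff
`F` is `μ`-almost covered by `xE⁻¹` for `μ`-a.a. `x ∈ E` and `μ`-almost
disjoint from `xE⁻¹` for `μ`-a.a. `x ∉ E`. -/
theorem almost_inclusion_exclusion
    {G : Type*} [Group G] [TopologicalSpace G] [PolishSpace G]
    [IsTopologicalGroup G] [MeasurableSpace G] [BorelSpace G]
    (μ : Measure G) [IsProbabilityMeasure μ]
    (E F : Set G) (hE : MeasurableSet E) (hF : MeasurableSet F)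
    (hEpos : 0 < μ E) (hFpos : 0 < μ F) :
    (∀ᵐ x ∂μ, x ∈ F → μ ((x • E) ∆ E) = 0) ↔
      ((∀ᵐ x ∂μ, x ∈ E → μ (F \ x • E⁻¹) = 0) ∧
        (∀ᵐ x ∂μ, x ∉ E → μ (F ∩ x • E⁻¹) = 0)) := by
  have hS : MeasurableSet {p : G × G | p.1⁻¹ * p.2 ∈ E} :=
    (measurable_fst.inv.mul measurable_snd) hE
  set W : Set (G × G) := {p | p.1 ∈ F ∧ p.2 ∈ (p.1 • E) ∆ E} with hWdef
  have hWeq : W = (Prod.fst ⁻¹' F) ∩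
      ({p : G × G | p.1⁻¹ * p.2 ∈ E} ∆ (Prod.snd ⁻¹' E)) := by
    ext ⟨x, y⟩
    simp [hWdef, Set.mem_symmDiff, mem_smul_set_iff_inv_smul_mem, smul_eq_mul]
  have hWmeas : MeasurableSet W := by
    rw [hWeq]
    exact (measurable_fst hF).inter (hS.symmDiff (measurable_snd hE))
  -- section at a fixed x
  have hsec : ∀ x : G, Prod.mk x ⁻¹' W = {y | x ∈ F ∧ y ∈ (x • E) ∆ E} := by
    intro x; rfl
  have lhs_iff : (∀ᵐ x ∂μ, x ∈ F → μ ((x • E) ∆ E) = 0) ↔ (μ.prod μ) W = 0 := by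
    rw [Measure.measure_prod_null hWmeas]
    apply eventually_congr
    filter_upwards with x
    by_cases hx : x ∈ F
    · simp [hsec, hx]
    · simp [hsec, hx]
  -- swap
  have hswap : (μ.prod μ) W = (μ.prod μ) (Prod.swap ⁻¹' W) := by
    conv_lhs => rw [← Measure.prod_swap]
    rw [Measure.map_apply measurable_swap hWmeas]
  have hW'meas : MeasurableSet (Prod.swap ⁻¹' W) := measurable_swap hWmeas
  have hsec' : ∀ y : G, Prod.mk y ⁻¹' (Prod.swap ⁻¹' W)
      = F ∩ {x | y ∈ (x • E) ∆ E} := by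
    intro y; ext x; simp [hWdef, Prod.swap, and_comm]
  -- membership rewriting: x ∈ y • E⁻¹ ↔ x⁻¹ * y ∈ E, y ∈ x • E ↔ x⁻¹ * y ∈ E
  have hmem : ∀ x y : G, (x ∈ y • E⁻¹) ↔ y ∈ x • E := by
    intro x y
    simp [mem_smul_set_iff_inv_smul_mem, smul_eq_mul, Set.mem_inv, mul_inv_rev]
  have hsecE : ∀ y ∈ E, F ∩ {x | y ∈ (x • E) ∆ E} = F \ y • E⁻¹ := by
    intro y hy
    ext x
    simp only [Set.mem_inter_iff, Set.mem_setOf_eq, Set.mem_symmDiff, Set.mem_diff,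
      hmem x y]
    tauto
  have hsecEc : ∀ y ∉ E, F ∩ {x | y ∈ (x • E) ∆ E} = F ∩ y • E⁻¹ := by
    intro y hy
    ext x
    simp only [Set.mem_inter_iff, Set.mem_setOf_eq, Set.mem_symmDiff, hmem x y]
    tauto
  rw [lhs_iff, hswap, Measure.measure_prod_null hW'meas]
  simp only [hsec']
  constructor
  · intro h
    constructor
    · filter_upwards [h] with y hy hyE
      rw [← hsecE y hyE]; exact hy
    · filter_upwards [h] with y hy hyE
      rw [← hsecEc y hyE]; exact hy
  · rintro ⟨h1, h2⟩
    filter_upwards [h1, h2] with y hy1 hy2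
    by_cases hyE : y ∈ E
    · rw [hsecE y hyE]; exact hy1 hyE
    · rw [hsecEc y hyE]; exact hy2 hyE
end
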